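/- Optimality of the deterministic greedy dynamic-programming policy for entropic-risk MDPs: Fix λ ≠ 0. Define optimal value functions backward by V*_{T+1}(s) = 0, Q*_t(s,a) = r(s,a) + (1/λ)·log Σ_{s'} P(s'|s,a)·exp(λ·V*_{t+1}(s')), and V*_t(s) = max_a Q*_t(s,a). Let ψ* be any deterministic Markov policy with ψ*_t(s) ∈ argmax_a Q*_t(s,a) for all t and s. Then for every stochastic Markov policy ψ, J^λ(ψ*) ≥ J^λ(ψ); moreover J^λ(ψ*) = (1/λ)·log Σ_s ζ₁(s)·exp(λ·V*_1(s)). -/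

import Mathlib

open Finset
open scoped Classical

/-- A finite-horizon MDP. -/
structure FinMDP (S A : Type) [Fintype S] [Fintype A] where
  P : S → A → S → ℝ
  P_nonneg : ∀ s a s', 0 ≤ P s a s'
  P_sum : ∀ s a, ∑ s', P s a s' = 1
  r : S → A → ℝ
  init : S → ℝ
  init_nonneg : ∀ s, 0 ≤ init s
  init_sum : ∑ s, init s = 1
  T : ℕ
  T_pos : 1 ≤ T

variable {S A : Type} [Fintype S] [Fintype A] [Nonempty S] [Nonempty A]

/-- A stochastic Markov policy: a pmf on actions at each (0-indexed) time and state. -/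
def IsMPolicy {S A : Type} [Fintype A] (ψ : ℕ → S → A → ℝ) : Prop :=
  ∀ t s, (∀ a, 0 ≤ ψ t s a) ∧ ∑ a, ψ t s a = 1

/-- Probability of a trajectory ((s_t, a_t))_{t<T} under the policy ψ. -/
noncomputable def mdpTrajProb (M : FinMDP S A) (ψ : ℕ → S → A → ℝ)
    (ω : Fin M.T → S × A) : ℝ :=
  M.init (ω ⟨0, M.T_pos⟩).1 *
  (∏ t : Fin M.T, ψ t.val (ω t).1 (ω t).2) *
  (∏ t : Fin M.T,
    if h : t.val + 1 < M.T then M.P (ω t).1 (ω t).2 (ω ⟨t.val + 1, h⟩).1 else 1)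

/-- Entropic-risk performance J^λ(ψ) = (1/λ)·log E^ψ[exp(λ·Σ_t r(S_t,A_t))]. -/
noncomputable def mdpJent (M : FinMDP S A) (ψ : ℕ → S → A → ℝ) (lam : ℝ) : ℝ :=
  (1/lam) * Real.log (∑ ω : Fin M.T → S × A,
    mdpTrajProb M ψ ω * Real.exp (lam * ∑ t : Fin M.T, M.r (ω t).1 (ω t).2))

/-- Backward optimal value function: `Vstar m` is V* at the (0-indexed) time
`T − m`, so `Vstar 0 = V*_{T+1} ≡ 0` and `Vstar T = V*_1`; it satisfies
V*_t(s) = max_a Q*_t(s,a). -/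
noncomputable def Vstar (M : FinMDP S A) (lam : ℝ) : ℕ → S → ℝ
  | 0 => fun _ => 0
  | (m+1) => fun s => ⨆ a : A, (M.r s a +
      (1/lam) * Real.log (∑ s', M.P s a s' * Real.exp (lam * Vstar M lam m s')))

/-- Optimal Q-function Q*_t(s,a) = r(s,a) + (1/λ)·log Σ_{s'} P(s'|s,a)·exp(λ·V*_{t+1}(s')),
where `m` counts the remaining steps: time t corresponds to `m = T − 1 − t`. -/
noncomputable def Qstar (M : FinMDP S A) (lam : ℝ) (m : ℕ) (s : S) (a : A) : ℝ :=
  M.r s a + (1/lam) * Real.log (∑ s', M.P s a s' * Real.exp (lam * Vstar M lam m s'))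

/-- The point-mass (deterministic) Markov policy associated with `d`. -/
noncomputable def detPol {S A : Type} (d : ℕ → S → A) : ℕ → S → A → ℝ :=
  fun t s a => if a = d t s then 1 else 0

/-! ### Auxiliary machinery -/

set_option linter.unusedSectionVars false

/-- Backward "value" of a weight system `g` along the chain. -/
noncomputable def Yval (P : S → A → S → ℝ) : (ℕ → S → A → ℝ) → ℕ → S → ℝ
  | g, 0, s => ∑ a, g 0 s a
  | g, n+1, s => ∑ a, g 0 s a * ∑ s', P s a s' * Yval P (fun t => g (t+1)) n s'

lemma chain_sum (P : S → A → S → ℝ) :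
    ∀ (n : ℕ) (hpos : 0 < n) (μ : S → ℝ) (g : ℕ → S → A → ℝ),
    (∑ ω : Fin n → S × A,
      μ (ω ⟨0, hpos⟩).1 * (∏ t : Fin n, g t.val (ω t).1 (ω t).2) *
      (∏ t : Fin n, if h : t.val + 1 < n then P (ω t).1 (ω t).2 (ω ⟨t.val + 1, h⟩).1 else 1))
    = ∑ s, μ s * Yval P g (n - 1) s := by
  intro n
  induction n with
  | zero => omega
  | succ m ih =>
    intro hpos μ g
    rw [← Equiv.sum_comp (Fin.consEquiv (fun _ : Fin (m+1) => S × A))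
      (fun ω : Fin (m+1) → S × A => μ (ω ⟨0, hpos⟩).1 *
        (∏ t : Fin (m+1), g t.val (ω t).1 (ω t).2) *
        (∏ t : Fin (m+1), if h : t.val + 1 < m+1 then
          P (ω t).1 (ω t).2 (ω ⟨t.val + 1, h⟩).1 else 1)),
      Fintype.sum_prod_type]
    simp only [Fin.consEquiv_apply, Fin.prod_univ_succ, Fin.mk_zero, Fin.cons_zero,
      Fin.cons_succ, Fin.val_zero, Fin.val_succ]
    rcases m with _ | k
    · simp [Yval, Fintype.sum_prod_type, Finset.mul_sum]
    · have hcons : ∀ (x : S × A) (f : Fin (k + 1) → S × A) (i : ℕ) (h : i + 1 < k + 2),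
          Fin.cons (α := fun _ : Fin (k+2) => S × A) x f ⟨i+1, h⟩
            = f ⟨i, Nat.lt_of_succ_lt_succ h⟩ :=
        fun x f i h => by
          exact @Fin.cons_succ (k+1) (fun _ => S × A) x f ⟨i, Nat.lt_of_succ_lt_succ h⟩
      have hsummand : ∀ (x : S × A) (f : Fin (k + 1) → S × A),
          μ x.1 * (g 0 x.1 x.2 * ∏ t : Fin (k+1), g (↑t + 1) (f t).1 (f t).2) *
            ((if h : 0 + 1 < k + 1 + 1 then P x.1 x.2
                (Fin.cons (α := fun _ : Fin (k+2) => S × A) x f ⟨0 + 1, h⟩).1 else 1) *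
             ∏ t : Fin (k+1), if h : ↑t + 1 + 1 < k + 1 + 1 then P (f t).1 (f t).2
                (Fin.cons (α := fun _ : Fin (k+2) => S × A) x f ⟨↑t + 1 + 1, h⟩).1 else 1)
          = μ x.1 * g 0 x.1 x.2 *
            ((P x.1 x.2 (f ⟨0, Nat.succ_pos k⟩).1 *
                ∏ t : Fin (k+1), g (↑t + 1) (f t).1 (f t).2) *
             ∏ t : Fin (k+1), if h : ↑t + 1 < k + 1 then P (f t).1 (f t).2
                (f ⟨↑t + 1, h⟩).1 else 1) := by
        intro x f
        rw [dif_pos (by omega : (0:ℕ) + 1 < k + 1 + 1), hcons]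
        have hpr : (∏ t : Fin (k+1), if h : ↑t + 1 + 1 < k + 1 + 1 then P (f t).1 (f t).2
              (Fin.cons (α := fun _ : Fin (k+2) => S × A) x f ⟨↑t + 1 + 1, h⟩).1 else 1)
            = ∏ t : Fin (k+1), if h : ↑t + 1 < k + 1 then P (f t).1 (f t).2
              (f ⟨↑t + 1, h⟩).1 else 1 := by
          apply Finset.prod_congr rfl
          intro t _
          by_cases h : (t : ℕ) + 1 < k + 1
          · rw [dif_pos (by omega : (t:ℕ) + 1 + 1 < k + 1 + 1), dif_pos h, hcons]
          · rw [dif_neg (by omega), dif_neg h]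
        rw [hpr]; ring
      simp only [hsummand]
      have hfac : ∀ x : S × A,
          (∑ f : Fin (k+1) → S × A, μ x.1 * g 0 x.1 x.2 *
            ((P x.1 x.2 (f ⟨0, Nat.succ_pos k⟩).1 *
                ∏ t : Fin (k+1), g (↑t + 1) (f t).1 (f t).2) *
             ∏ t : Fin (k+1), if h : ↑t + 1 < k + 1 then P (f t).1 (f t).2
                (f ⟨↑t + 1, h⟩).1 else 1))
          = μ x.1 * g 0 x.1 x.2 *
            ∑ s, P x.1 x.2 s * Yval P (fun t => g (t+1)) k s := by
        intro x
        have ih' := ih (Nat.succ_pos k) (P x.1 x.2) (fun t => g (t+1))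
        simp only [Nat.add_sub_cancel] at ih'
        rw [← Finset.mul_sum, ← ih']
      simp only [hfac]
      rw [Fintype.sum_prod_type]
      simp only [Yval, Nat.add_sub_cancel, Finset.mul_sum]
      apply Finset.sum_congr rfl
      intro s _
      apply Finset.sum_congr rfl
      intro a _
      apply Finset.sum_congr rfl
      intro x _
      ring

lemma exists_pos_of_sum_one {ι : Type} [Fintype ι] {f : ι → ℝ}
    (h0 : ∀ i, 0 ≤ f i) (h1 : ∑ i, f i = 1) : ∃ i, 0 < f i := by
  by_contra h
  push_neg at h
  have : ∑ i, f i = 0 := Finset.sum_eq_zero fun i _ => le_antisymm (h i) (h0 i)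
  rw [h1] at this
  norm_num at this

lemma sumPexp_pos (M : FinMDP S A) (lam : ℝ) (m : ℕ) (s : S) (a : A) :
    0 < ∑ s', M.P s a s' * Real.exp (lam * Vstar M lam m s') := by
  obtain ⟨s0, hs0⟩ := exists_pos_of_sum_one (M.P_nonneg s a) (M.P_sum s a)
  apply Finset.sum_pos' (fun s' _ => mul_nonneg (M.P_nonneg s a s') (Real.exp_pos _).le)
  exact ⟨s0, Finset.mem_univ _, mul_pos hs0 (Real.exp_pos _)⟩

lemma exp_Qstar (M : FinMDP S A) {lam : ℝ} (hlam : lam ≠ 0) (m : ℕ) (s : S) (a : A) :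
    Real.exp (lam * Qstar M lam m s a)
      = Real.exp (lam * M.r s a) * ∑ s', M.P s a s' * Real.exp (lam * Vstar M lam m s') := by
  rw [Qstar, mul_add, Real.exp_add]
  congr 1
  rw [← mul_assoc, mul_one_div, div_self hlam, one_mul,
    Real.exp_log (sumPexp_pos M lam m s a)]

lemma Qstar_le_Vstar (M : FinMDP S A) (lam : ℝ) (m : ℕ) (s : S) (a : A) :
    Qstar M lam m s a ≤ Vstar M lam (m+1) s :=
  le_ciSup (Set.Finite.bddAbove (Set.finite_range _)) a

lemma Qstar_zero (M : FinMDP S A) {lam : ℝ} (hlam : lam ≠ 0) (s : S) (a : A) :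
    Qstar M lam 0 s a = M.r s a := by
  simp [Qstar, Vstar, M.P_sum s a]

lemma Vstar_eq_det (M : FinMDP S A) (lam : ℝ) (d : ℕ → S → A)
    (hd : ∀ t, t < M.T → ∀ s a, Qstar M lam (M.T - 1 - t) s a ≤
        Qstar M lam (M.T - 1 - t) s (d t s))
    (t : ℕ) (ht : t < M.T) (s : S) :
    Vstar M lam (M.T - 1 - t + 1) s = Qstar M lam (M.T - 1 - t) s (d t s) :=
  le_antisymm (ciSup_le fun a => hd t ht s a)
    (le_ciSup (Set.Finite.bddAbove (Set.finite_range _)) (d t s))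

lemma Yval_pos (M : FinMDP S A) (lam : ℝ) :
    ∀ (n : ℕ) (ψ : ℕ → S → A → ℝ), (∀ t s, (∀ a, 0 ≤ ψ t s a) ∧ ∑ a, ψ t s a = 1) →
    ∀ s, 0 < Yval M.P (fun t s a => ψ t s a * Real.exp (lam * M.r s a)) n s := by
  intro n
  induction n with
  | zero =>
    intro ψ hψ s
    rw [Yval]
    obtain ⟨a0, ha0⟩ := exists_pos_of_sum_one (hψ 0 s).1 (hψ 0 s).2
    apply Finset.sum_pos'
      (fun a _ => mul_nonneg ((hψ 0 s).1 a) (Real.exp_pos _).le)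
    exact ⟨a0, Finset.mem_univ _, mul_pos ha0 (Real.exp_pos _)⟩
  | succ n ih =>
    intro ψ hψ s
    rw [Yval]
    obtain ⟨a0, ha0⟩ := exists_pos_of_sum_one (hψ 0 s).1 (hψ 0 s).2
    have hinner : ∀ a, 0 < ∑ s', M.P s a s' *
        Yval M.P (fun t s a => ψ (t+1) s a * Real.exp (lam * M.r s a)) n s' := by
      intro a
      obtain ⟨s0, hs0⟩ := exists_pos_of_sum_one (M.P_nonneg s a) (M.P_sum s a)
      have hY := ih (fun t => ψ (t+1)) (fun t s => hψ (t+1) s)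
      apply Finset.sum_pos' (fun s' _ => mul_nonneg (M.P_nonneg s a s') (hY s').le)
      exact ⟨s0, Finset.mem_univ _, mul_pos hs0 (hY s0)⟩
    apply Finset.sum_pos'
      (fun a _ => mul_nonneg (mul_nonneg ((hψ 0 s).1 a) (Real.exp_pos _).le) (hinner a).le)
    exact ⟨a0, Finset.mem_univ _,
      mul_pos (mul_pos ha0 (Real.exp_pos _)) (hinner a0)⟩

lemma Yval_le (M : FinMDP S A) {lam : ℝ} (hpos : 0 < lam) :
    ∀ (n : ℕ) (ψ : ℕ → S → A → ℝ), (∀ t s, (∀ a, 0 ≤ ψ t s a) ∧ ∑ a, ψ t s a = 1) →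
    ∀ s, Yval M.P (fun t s a => ψ t s a * Real.exp (lam * M.r s a)) n s
      ≤ Real.exp (lam * Vstar M lam (n+1) s) := by
  intro n
  induction n with
  | zero =>
    intro ψ hψ s
    rw [Yval]
    calc ∑ a, ψ 0 s a * Real.exp (lam * M.r s a)
        ≤ ∑ a, ψ 0 s a * Real.exp (lam * Vstar M lam 1 s) := by
          apply Finset.sum_le_sum
          intro a _
          apply mul_le_mul_of_nonneg_left _ ((hψ 0 s).1 a)
          apply Real.exp_le_exp.2
          apply mul_le_mul_of_nonneg_left _ hpos.le
          rw [← Qstar_zero M hpos.ne' s a]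
          exact Qstar_le_Vstar M lam 0 s a
      _ = Real.exp (lam * Vstar M lam 1 s) := by
          rw [← Finset.sum_mul, (hψ 0 s).2, one_mul]
  | succ n ih =>
    intro ψ hψ s
    rw [Yval]
    have ih' := ih (fun t => ψ (t+1)) (fun t s => hψ (t+1) s)
    calc ∑ a, ψ 0 s a * Real.exp (lam * M.r s a) *
          ∑ s', M.P s a s' *
            Yval M.P (fun t s a => ψ (t+1) s a * Real.exp (lam * M.r s a)) n s'
        ≤ ∑ a, ψ 0 s a * Real.exp (lam * M.r s a) *
          ∑ s', M.P s a s' * Real.exp (lam * Vstar M lam (n+1) s') := by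
          apply Finset.sum_le_sum
          intro a _
          apply mul_le_mul_of_nonneg_left _
            (mul_nonneg ((hψ 0 s).1 a) (Real.exp_pos _).le)
          apply Finset.sum_le_sum
          intro s' _
          exact mul_le_mul_of_nonneg_left (ih' s') (M.P_nonneg s a s')
      _ = ∑ a, ψ 0 s a * Real.exp (lam * Qstar M lam (n+1) s a) := by
          apply Finset.sum_congr rfl
          intro a _
          rw [exp_Qstar M hpos.ne' (n+1) s a, mul_assoc]
      _ ≤ ∑ a, ψ 0 s a * Real.exp (lam * Vstar M lam (n+2) s) := by
          apply Finset.sum_le_sum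
          intro a _
          apply mul_le_mul_of_nonneg_left _ ((hψ 0 s).1 a)
          exact Real.exp_le_exp.2 (mul_le_mul_of_nonneg_left
            (Qstar_le_Vstar M lam (n+1) s a) hpos.le)
      _ = Real.exp (lam * Vstar M lam (n+2) s) := by
          rw [← Finset.sum_mul, (hψ 0 s).2, one_mul]

lemma Yval_ge (M : FinMDP S A) {lam : ℝ} (hneg : lam < 0) :
    ∀ (n : ℕ) (ψ : ℕ → S → A → ℝ), (∀ t s, (∀ a, 0 ≤ ψ t s a) ∧ ∑ a, ψ t s a = 1) →
    ∀ s, Real.exp (lam * Vstar M lam (n+1) s)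
      ≤ Yval M.P (fun t s a => ψ t s a * Real.exp (lam * M.r s a)) n s := by
  intro n
  induction n with
  | zero =>
    intro ψ hψ s
    rw [Yval]
    calc Real.exp (lam * Vstar M lam 1 s)
        = ∑ a, ψ 0 s a * Real.exp (lam * Vstar M lam 1 s) := by
          rw [← Finset.sum_mul, (hψ 0 s).2, one_mul]
      _ ≤ ∑ a, ψ 0 s a * Real.exp (lam * M.r s a) := by
          apply Finset.sum_le_sum
          intro a _
          apply mul_le_mul_of_nonneg_left _ ((hψ 0 s).1 a)
          apply Real.exp_le_exp.2
          rw [← Qstar_zero M hneg.ne (s := s) (a := a)]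
          exact mul_le_mul_of_nonpos_left (Qstar_le_Vstar M lam 0 s a) hneg.le
  | succ n ih =>
    intro ψ hψ s
    rw [Yval]
    have ih' := ih (fun t => ψ (t+1)) (fun t s => hψ (t+1) s)
    calc Real.exp (lam * Vstar M lam (n+2) s)
        = ∑ a, ψ 0 s a * Real.exp (lam * Vstar M lam (n+2) s) := by
          rw [← Finset.sum_mul, (hψ 0 s).2, one_mul]
      _ ≤ ∑ a, ψ 0 s a * Real.exp (lam * Qstar M lam (n+1) s a) := by
          apply Finset.sum_le_sum
          intro a _
          apply mul_le_mul_of_nonneg_left _ ((hψ 0 s).1 a)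
          exact Real.exp_le_exp.2 (mul_le_mul_of_nonpos_left
            (Qstar_le_Vstar M lam (n+1) s a) hneg.le)
      _ = ∑ a, ψ 0 s a * Real.exp (lam * M.r s a) *
          ∑ s', M.P s a s' * Real.exp (lam * Vstar M lam (n+1) s') := by
          apply Finset.sum_congr rfl
          intro a _
          rw [exp_Qstar M hneg.ne (n+1) s a, mul_assoc]
      _ ≤ ∑ a, ψ 0 s a * Real.exp (lam * M.r s a) *
          ∑ s', M.P s a s' *
            Yval M.P (fun t s a => ψ (t+1) s a * Real.exp (lam * M.r s a)) n s' := by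
          apply Finset.sum_le_sum
          intro a _
          apply mul_le_mul_of_nonneg_left _
            (mul_nonneg ((hψ 0 s).1 a) (Real.exp_pos _).le)
          apply Finset.sum_le_sum
          intro s' _
          exact mul_le_mul_of_nonneg_left (ih' s') (M.P_nonneg s a s')

lemma Yval_det (M : FinMDP S A) {lam : ℝ} (hlam : lam ≠ 0) (d : ℕ → S → A)
    (hd : ∀ t, t < M.T → ∀ s a, Qstar M lam (M.T - 1 - t) s a ≤
        Qstar M lam (M.T - 1 - t) s (d t s)) :
    ∀ n, n < M.T → ∀ s,
      Yval M.P (fun t s a => detPol d (M.T - 1 - n + t) s a * Real.exp (lam * M.r s a)) n s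
        = Real.exp (lam * Vstar M lam (n+1) s) := by
  intro n
  induction n with
  | zero =>
    intro hn s
    rw [Yval]
    simp only [detPol, Nat.sub_zero, Nat.add_zero]
    simp only [ite_mul, one_mul, zero_mul]
    rw [Finset.sum_ite_eq' Finset.univ (d (M.T - 1) s)
      (fun a => Real.exp (lam * M.r s a))]
    simp only [Finset.mem_univ, if_true]
    have h := Vstar_eq_det M lam d hd (M.T - 1) (by omega) s
    have h0 : M.T - 1 - (M.T - 1) = 0 := by omega
    rw [h0] at h
    rw [← Qstar_zero M hlam s (d (M.T - 1) s), ← h]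
  | succ n ih =>
    intro hn s
    rw [Yval]
    have harg : ∀ t : ℕ, M.T - 1 - (n+1) + (t+1) = M.T - 1 - n + t := fun t => by omega
    simp only [harg]
    have ihs : ∀ s', Yval M.P
        (fun t s a => detPol d (M.T - 1 - n + t) s a * Real.exp (lam * M.r s a)) n s'
        = Real.exp (lam * Vstar M lam (n+1) s') := ih (by omega)
    simp only [ihs]
    simp only [detPol, Nat.add_zero]
    simp only [ite_mul, one_mul, zero_mul]
    rw [Finset.sum_ite_eq' Finset.univ (d (M.T - 1 - (n+1)) s)
      (fun a => Real.exp (lam * M.r s a) *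
        ∑ s', M.P s a s' * Real.exp (lam * Vstar M lam (n+1) s'))]
    simp only [Finset.mem_univ, if_true]
    rw [← exp_Qstar M hlam (n+1) s (d (M.T - 1 - (n+1)) s)]
    have h := Vstar_eq_det M lam d hd (M.T - 1 - (n+1)) (by omega) s
    have h1 : M.T - 1 - (M.T - 1 - (n+1)) = n + 1 := by omega
    rw [h1] at h
    rw [← h]

lemma G_eq (M : FinMDP S A) (lam : ℝ) (ψ : ℕ → S → A → ℝ) :
    (∑ ω : Fin M.T → S × A,
      mdpTrajProb M ψ ω * Real.exp (lam * ∑ t : Fin M.T, M.r (ω t).1 (ω t).2))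
    = ∑ s, M.init s *
        Yval M.P (fun t s a => ψ t s a * Real.exp (lam * M.r s a)) (M.T - 1) s := by
  rw [← chain_sum M.P M.T M.T_pos M.init (fun t s a => ψ t s a * Real.exp (lam * M.r s a))]
  apply Finset.sum_congr rfl
  intro ω _
  rw [mdpTrajProb, Finset.mul_sum, Real.exp_sum, Finset.prod_mul_distrib]
  ring

/-- **Optimality of the deterministic greedy dynamic-programming policy for
entropic-risk MDPs**: if ψ*_t(s) maximizes Q*_t(s,·) for every t and s, then ψ*
dominates every stochastic Markov policy, and J^λ(ψ*) =
(1/λ)·log Σ_s ζ₁(s)·exp(λ·V*_1(s)). -/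
theorem entropic_mdp_greedy_optimal
    (M : FinMDP S A) (lam : ℝ) (hlam : lam ≠ 0)
    (d : ℕ → S → A)
    (hd : ∀ t, t < M.T → ∀ s a, Qstar M lam (M.T - 1 - t) s a ≤
        Qstar M lam (M.T - 1 - t) s (d t s)) :
    (∀ ψ : ℕ → S → A → ℝ, IsMPolicy ψ → mdpJent M ψ lam ≤ mdpJent M (detPol d) lam) ∧
    mdpJent M (detPol d) lam
      = (1/lam) * Real.log (∑ s, M.init s * Real.exp (lam * Vstar M lam M.T s)) := by
  have hT : M.T - 1 + 1 = M.T := by have := M.T_pos; omega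
  have hdetY : ∀ s, Yval M.P
      (fun t s a => detPol d t s a * Real.exp (lam * M.r s a)) (M.T - 1) s
      = Real.exp (lam * Vstar M lam M.T s) := by
    intro s
    have h := Yval_det M hlam d hd (M.T - 1) (by have := M.T_pos; omega) s
    have h1 : ∀ t : ℕ, M.T - 1 - (M.T - 1) + t = t := fun t => by omega
    simp only [h1, hT] at h
    exact h
  have hGdet : (∑ ω : Fin M.T → S × A,
      mdpTrajProb M (detPol d) ω * Real.exp (lam * ∑ t : Fin M.T, M.r (ω t).1 (ω t).2))
      = ∑ s, M.init s * Real.exp (lam * Vstar M lam M.T s) := by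
    rw [G_eq]
    exact Finset.sum_congr rfl fun s _ => by rw [hdetY]
  have hCpos : 0 < ∑ s, M.init s * Real.exp (lam * Vstar M lam M.T s) := by
    obtain ⟨s0, hs0⟩ := exists_pos_of_sum_one M.init_nonneg M.init_sum
    apply Finset.sum_pos' (fun s _ => mul_nonneg (M.init_nonneg s) (Real.exp_pos _).le)
    exact ⟨s0, Finset.mem_univ _, mul_pos hs0 (Real.exp_pos _)⟩
  constructor
  · intro ψ hψ
    rw [mdpJent, mdpJent, hGdet, G_eq]
    rcases hlam.lt_or_gt with hneg | hposl
    · -- lam < 0 : detPol sum is a lower bound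
      have hle : (∑ s, M.init s * Real.exp (lam * Vstar M lam M.T s))
          ≤ ∑ s, M.init s *
            Yval M.P (fun t s a => ψ t s a * Real.exp (lam * M.r s a)) (M.T - 1) s := by
        apply Finset.sum_le_sum
        intro s _
        apply mul_le_mul_of_nonneg_left _ (M.init_nonneg s)
        have := Yval_ge M hneg (M.T - 1) ψ hψ s
        rw [hT] at this
        exact this
      exact mul_le_mul_of_nonpos_left (Real.log_le_log hCpos hle)
        (by rw [one_div]; exact inv_nonpos.2 hneg.le)
    · -- 0 < lam
      have hle : (∑ s, M.init s *
            Yval M.P (fun t s a => ψ t s a * Real.exp (lam * M.r s a)) (M.T - 1) s)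
          ≤ ∑ s, M.init s * Real.exp (lam * Vstar M lam M.T s) := by
        apply Finset.sum_le_sum
        intro s _
        apply mul_le_mul_of_nonneg_left _ (M.init_nonneg s)
        have := Yval_le M hposl (M.T - 1) ψ hψ s
        rw [hT] at this
        exact this
      have hGpos : 0 < ∑ s, M.init s *
          Yval M.P (fun t s a => ψ t s a * Real.exp (lam * M.r s a)) (M.T - 1) s := by
        obtain ⟨s0, hs0⟩ := exists_pos_of_sum_one M.init_nonneg M.init_sum
        have hY := Yval_pos M lam (M.T - 1) ψ hψ
        apply Finset.sum_pos' (fun s _ => mul_nonneg (M.init_nonneg s) (hY s).le)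
        exact ⟨s0, Finset.mem_univ _, mul_pos hs0 (hY s0)⟩
      exact mul_le_mul_of_nonneg_left (Real.log_le_log hGpos hle)
        (by rw [one_div]; exact (inv_nonneg).2 hposl.le)
  · rw [mdpJent, hGdet]
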